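/- arXiv:1710.07574 — 2 statements merged into one kernel-verified Lean document; each statement's English description precedes it below -/
import Mathlib

section
/- Let f : ℝⁿ → ℝⁿ be continuously differentiable with f(0) = 0, let D be an open set containing 0, and let V : ℝⁿ → ℝ be continuously differentiable with V(0) = 0, V(x) > 0 for all x ≠ 0 in D, and ∇V(x)·f(x) < 0 for all x ≠ 0 in D. If β > 0 is such that the sublevel set Ω_β = {x ∈ D : V(x) ≤ β} is compact and contained in D, then Ω_β is positively invariant under the flow of ẋ = f(x). -/
open Filter Topology Set

lemma deriv_neg_eventually_lt {g : ℝ → ℝ} {T g' : ℝ} (h : HasDerivAt g g' T)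
    (hg' : g' < 0) : ∀ᶠ s in 𝓝[>] T, g s < g T := by
  have h1 : Tendsto (slope g T) (𝓝[≠] T) (𝓝 g') := hasDerivAt_iff_tendsto_slope.mp h
  have h2 : ∀ᶠ s in 𝓝[≠] T, slope g T s < 0 := h1.eventually (eventually_lt_nhds hg')
  have h3 : ∀ᶠ s in 𝓝[>] T, slope g T s < 0 :=
    h2.filter_mono (nhdsWithin_mono T fun s hs => ne_of_gt hs)
  filter_upwards [h3, self_mem_nhdsWithin] with s hs hsT
  rw [slope_def_field, div_neg_iff] at hs
  simp only [mem_Ioi] at hsT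
  rcases hs with ⟨h4, h5⟩ | ⟨h4, h5⟩
  · linarith
  · linarith

/-- Lyapunov sublevel sets are positively invariant. -/
theorem stmt_0 {n : ℕ} (f : EuclideanSpace ℝ (Fin n) → EuclideanSpace ℝ (Fin n))
    (hf : ContDiff ℝ 1 f) (hf0 : f 0 = 0)
    (D : Set (EuclideanSpace ℝ (Fin n))) (hD : IsOpen D) (h0D : (0 : EuclideanSpace ℝ (Fin n)) ∈ D)
    (V : EuclideanSpace ℝ (Fin n) → ℝ) (hV : ContDiff ℝ 1 V) (hV0 : V 0 = 0)
    (hVpos : ∀ x ∈ D, x ≠ 0 → 0 < V x)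
    (hVdot : ∀ x ∈ D, x ≠ 0 → (inner ℝ (gradient V x) (f x) : ℝ) < 0)
    (β : ℝ) (hβ : 0 < β)
    (Ω : Set (EuclideanSpace ℝ (Fin n))) (hΩ : Ω = {x ∈ D | V x ≤ β})
    (hΩc : IsCompact Ω) (hΩD : Ω ⊆ D) :
    ∀ x : ℝ → EuclideanSpace ℝ (Fin n),
      (∀ t, HasDerivAt x (f (x t)) t) → x 0 ∈ Ω → ∀ t, 0 ≤ t → x t ∈ Ω := by
  intro x hx hx0 t0 ht0
  have hcx : Continuous x := by
    rw [continuous_iff_continuousAt]; exact fun t => (hx t).continuousAt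
  have hVd : ∀ t, HasDerivAt (fun s => V (x s))
      ((inner ℝ (gradient V (x t)) (f (x t)) : ℝ)) t := by
    intro t
    have h1 : HasFDerivAt V (fderiv ℝ V (x t)) (x t) :=
      (hV.differentiable one_ne_zero (x t)).hasFDerivAt
    have h2 := h1.comp_hasDerivAt t (hx t)
    have h3 : (inner ℝ (gradient V (x t)) (f (x t)) : ℝ) = fderiv ℝ V (x t) (f (x t)) := by
      rw [gradient]; exact InnerProductSpace.toDual_symm_apply
    rw [h3]; exact h2
  set A : Set ℝ := {t ∈ Icc 0 t0 | ∀ s ∈ Icc 0 t, x s ∈ Ω} with hA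
  have h0A : (0 : ℝ) ∈ A := by
    refine ⟨⟨le_rfl, ht0⟩, fun s hs => ?_⟩
    have : s = 0 := le_antisymm hs.2 hs.1
    rwa [this]
  have hAne : A.Nonempty := ⟨0, h0A⟩
  have hAbdd : BddAbove A := ⟨t0, fun t ht => ht.1.2⟩
  set T := sSup A with hT
  have hT0 : 0 ≤ T := le_csSup hAbdd h0A
  have hTt0 : T ≤ t0 := csSup_le hAne fun t ht => ht.1.2
  have hΩclosed : IsClosed Ω := hΩc.isClosed
  have hlt : ∀ s, 0 ≤ s → s < T → x s ∈ Ω := by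
    intro s hs0 hsT
    obtain ⟨t, htA, hst⟩ := exists_lt_of_lt_csSup hAne hsT
    exact htA.2 s ⟨hs0, le_of_lt hst⟩
  have hxT : x T ∈ Ω := by
    rcases eq_or_lt_of_le hT0 with h | h
    · rw [← h]; exact hx0
    · have hmem : Iio T ∩ Ioi 0 ∈ 𝓝[<] T := inter_mem_nhdsWithin (Iio T) (Ioi_mem_nhds h)
      have hev : ∀ᶠ s in 𝓝[<] T, x s ∈ Ω :=
        Filter.mem_of_superset hmem fun y hy => hlt y (le_of_lt hy.2) hy.1
      have htend : Tendsto x (𝓝[<] T) (𝓝 (x T)) :=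
        (hcx.tendsto T).mono_left nhdsWithin_le_nhds
      have := mem_closure_of_tendsto htend hev
      rwa [hΩclosed.closure_eq] at this
  rcases eq_or_lt_of_le hTt0 with hTeq | hTlt
  · rw [← hTeq]; exact hxT
  · exfalso
    have hxTD : x T ∈ D := hΩD hxT
    have hxTβ : V (x T) ≤ β := by rw [hΩ] at hxT; exact hxT.2
    have hevD : ∀ᶠ s in 𝓝 T, x s ∈ D := hcx.continuousAt.eventually_mem (hD.mem_nhds hxTD)
    have hev : ∀ᶠ s in 𝓝[>] T, x s ∈ Ω := by
      have hevβ : ∀ᶠ s in 𝓝[>] T, V (x s) < β := by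
        rcases lt_or_eq_of_le hxTβ with hlt' | heq
        · have : ∀ᶠ s in 𝓝 T, V (x s) < β :=
            ((hV.continuous.comp hcx).continuousAt).eventually (eventually_lt_nhds hlt')
          exact this.filter_mono nhdsWithin_le_nhds
        · have hne : x T ≠ 0 := by
            intro h0; rw [h0, hV0] at heq; linarith
          have hd := hVdot (x T) hxTD hne
          have := deriv_neg_eventually_lt (hVd T) hd
          filter_upwards [this] with s hs
          rwa [heq] at hs
      filter_upwards [hevβ, hevD.filter_mono nhdsWithin_le_nhds] with s h1 h2
      rw [hΩ]; exact ⟨h2, le_of_lt h1⟩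
    obtain ⟨u, hu, hub⟩ := mem_nhdsGT_iff_exists_Ioc_subset.mp hev
    have ht1T : T < min u t0 := lt_min hu hTlt
    have ht1A : min u t0 ∈ A := by
      refine ⟨⟨le_trans hT0 (le_of_lt ht1T), min_le_right _ _⟩, fun s hs => ?_⟩
      rcases le_or_gt s T with h | h
      · rcases h.lt_or_eq with h' | h'
        · exact hlt s hs.1 h'
        · rw [h']; exact hxT
      · exact hub ⟨h, le_trans hs.2 (min_le_left _ _)⟩
    exact absurd (le_csSup hAbdd ht1A) (not_le.mpr ht1T)
end

section
/- Let p(z) = zᵀAz with A symmetric positive definite and let V be continuous with V(0) = 0. The optimal value β* = sup{β : {p ≤ β} ⊆ {V ≤ 1}} equals inf{p(z) : V(z) = 1} when {V ≤ 1} is compact with boundary {V = 1}; i.e., the largest ellipsoid level set inscribed in the unit Lyapunov sublevel set touches its boundary. -/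
open Matrix

/-- The largest ellipsoid level set {p ≤ β} inscribed in the compact unit
Lyapunov sublevel set {V ≤ 1} touches its boundary: the optimal β equals inf{p(z) : V(z)=1}. -/
theorem stmt_17 {n : ℕ} (A : Matrix (Fin n) (Fin n) ℝ) (hAs : A.IsSymm) (hA : A.PosDef)
    (p : (Fin n → ℝ) → ℝ) (hp : ∀ z, p z = z ⬝ᵥ A.mulVec z)
    (V : (Fin n → ℝ) → ℝ) (hV : Continuous V) (hV0 : V 0 = 0)
    (hcpt : IsCompact {z : Fin n → ℝ | V z ≤ 1})
    (hbd : frontier {z : Fin n → ℝ | V z ≤ 1} = {z : Fin n → ℝ | V z = 1})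
    (h0 : (0 : Fin n → ℝ) ∈ interior {z : Fin n → ℝ | V z ≤ 1}) :
    sSup {β : ℝ | {z : Fin n → ℝ | p z ≤ β} ⊆ {z : Fin n → ℝ | V z ≤ 1}} =
      sInf (p '' {z : Fin n → ℝ | V z = 1}) := by
  set S : Set (Fin n → ℝ) := {z | V z ≤ 1} with hS
  set F : Set (Fin n → ℝ) := {z | V z = 1} with hFdef
  have hScl : IsClosed S := isClosed_le hV continuous_const
  have hpc : Continuous p := by
    have : Continuous (fun z : Fin n → ℝ => z ⬝ᵥ A.mulVec z) := by
      simp only [dotProduct, Matrix.mulVec]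
      fun_prop
    convert this using 1
    funext z; exact hp z
  by_cases hF : F.Nonempty
  · -- F compact, p attains min m on F
    have hFcl : IsClosed F := by
      rw [← hbd]; exact isClosed_frontier
    have hFS : F ⊆ S := fun z hz => le_of_eq hz
    have hFc : IsCompact F := hcpt.of_isClosed_subset hFcl hFS
    obtain ⟨z₀, hz₀F, hmin⟩ := hFc.exists_isMinOn hF hpc.continuousOn
    set m := p z₀ with hm
    have hz₀ne : z₀ ≠ 0 := by
      intro h
      have : V z₀ = 1 := hz₀F
      rw [h, hV0] at this; norm_num at this
    have hmpos : 0 < m := by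
      rw [hm, hp]; exact hA.dotProduct_mulVec_pos hz₀ne
    -- scaling identity
    have hscale : ∀ (t : ℝ) (z : Fin n → ℝ), p (t • z) = t ^ 2 * p z := by
      intro t z
      rw [hp, hp, Matrix.mulVec_smul, smul_dotProduct, dotProduct_smul,
        smul_eq_mul, smul_eq_mul]; ring
    -- m ∈ B
    have hmB : {z : Fin n → ℝ | p z ≤ m} ⊆ S := by
      intro z hz
      by_contra hzS
      have hVz : 1 < V z := lt_of_not_ge hzS
      have hcont : ContinuousOn (fun t : ℝ => V (t • z)) (Set.Icc 0 1) :=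
        (hV.comp (continuous_id.smul continuous_const)).continuousOn
      have h01 : (0:ℝ) ≤ 1 := zero_le_one
      have hiv : (1:ℝ) ∈ Set.Icc (V ((0:ℝ) • z)) (V ((1:ℝ) • z)) := by
        constructor
        · simp [hV0]
        · simp [le_of_lt hVz]
      obtain ⟨t, htI, htV⟩ := intermediate_value_Icc h01 hcont hiv
      have htne1 : t ≠ 1 := by
        intro h; rw [h] at htV; simp only [one_smul] at htV
        exact absurd htV (ne_of_gt hVz)
      have ht1 : t < 1 := lt_of_le_of_ne htI.2 htne1
      have ht0 : 0 ≤ t := htI.1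
      have htF : (t • z) ∈ F := htV
      have h1 : m ≤ p (t • z) := hmin htF
      have h2 : p (t • z) = t ^ 2 * p z := hscale t z
      have ht2 : t ^ 2 < 1 := by nlinarith
      have hpz : p z ≤ m := hz
      nlinarith
    -- any β ∈ B satisfies β ≤ m
    have hub : ∀ β ∈ {β : ℝ | {z : Fin n → ℝ | p z ≤ β} ⊆ S}, β ≤ m := by
      intro β hβ
      by_contra hβm
      have hmβ : m < β := lt_of_not_ge hβm
      have hz₀fr : z₀ ∈ frontier S := by rw [hbd]; exact hz₀F
      have hz₀ni : z₀ ∉ interior S := by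
        intro h
        have := frontier_subset_closure hz₀fr
        exact (hz₀fr.2) h
      -- z₀ ∈ closure Sᶜ
      have hz₀cl : z₀ ∈ closure Sᶜ := by
        rw [closure_compl]; exact hz₀ni
      have hU : IsOpen {z : Fin n → ℝ | p z < β} := isOpen_lt hpc continuous_const
      have hz₀U : z₀ ∈ {z : Fin n → ℝ | p z < β} := hmβ
      obtain ⟨z, hzU, hzC⟩ := mem_closure_iff.mp hz₀cl _ hU hz₀U
      have : z ∈ {z | p z ≤ β} := le_of_lt (show p z < β from hzU)
      exact hzC (hβ this)
    have hlhs : sSup {β : ℝ | {z : Fin n → ℝ | p z ≤ β} ⊆ S} = m :=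
      IsGreatest.csSup_eq ⟨hmB, hub⟩
    have hrhs : sInf (p '' F) = m := by
      apply IsLeast.csInf_eq
      constructor
      · exact ⟨z₀, hz₀F, rfl⟩
      · rintro y ⟨z, hzF, rfl⟩
        exact hmin hzF
    rw [hlhs, hrhs]
  · -- F empty: S is clopen nonempty, hence univ; both sides are junk value 0
    have hFe : F = ∅ := Set.not_nonempty_iff_eq_empty.mp hF
    have hfr : frontier S = ∅ := by rw [hbd]; exact hFe
    have hSsub : S \ interior S = ∅ := by rw [← hScl.frontier_eq]; exact hfr
    have hSo : IsOpen S := by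
      have h1 : S ⊆ interior S := Set.diff_eq_empty.mp hSsub
      have h2 : interior S = S := le_antisymm interior_subset h1
      rw [← h2]; exact isOpen_interior
    have hSne : S.Nonempty := ⟨0, by simp [hS, hV0]⟩
    have hSuniv : S = Set.univ := (IsClopen.eq_univ ⟨hScl, hSo⟩ hSne)
    have hB : {β : ℝ | {z : Fin n → ℝ | p z ≤ β} ⊆ S} = Set.univ := by
      ext β; simp [hSuniv, Set.subset_univ]
    rw [hB, hFe]
    simp [Real.sSup_univ, Real.sInf_empty]
end
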